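/- Let D=(N∪{s},E) be an Eulerian multidigraph (every node has in-degree equal to out-degree). Then for every arc (u,s) entering s, there exists an arc (s,w) leaving s such that replacing the pair of arcs (u,s),(s,w) by a new parallel copy of the arc (u,w) preserves λ(v,t), the maximum number of arc-disjoint directed v-to-t paths, for all pairs v,t ∈ N. -/

import Mathlib

/-- There exist `n` pairwise arc-disjoint directed `v`-`t` paths in the multidigraph
with arc multiset `E`: a list of `n` vertex sequences, each starting at `v` and ending
at `t`, whose combined multiset of traversed arcs is contained in `E`. -/
def HasDisjPaths {V : Type*} [DecidableEq V]
    (E : Multiset (V × V)) (v t : V) (n : ℕ) : Prop :=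
  ∃ Ps : List (List V), Ps.length = n ∧
    (∀ P ∈ Ps, P.head? = some v ∧ P.getLast? = some t) ∧
    (Ps.map fun P => ((P.zip P.tail : List (V × V)) : Multiset (V × V))).sum ≤ E


set_option linter.unusedSectionVars false

namespace FJ

variable {V : Type*} [DecidableEq V]

def rho (E : Multiset (V × V)) (X : V → Bool) : ℕ :=
  E.countP fun a => X a.1 = false ∧ X a.2 = true

def arcsOf (P : List V) : Multiset (V × V) := (P.zip P.tail : List (V × V))

lemma rho_mono {E F : Multiset (V × V)} (h : E ≤ F) (X : V → Bool) :
    rho E X ≤ rho F X := Multiset.countP_le_of_le _ h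

lemma rho_cons (a : V × V) (E : Multiset (V × V)) (X : V → Bool) :
    rho (a ::ₘ E) X = rho E X + if X a.1 = false ∧ X a.2 = true then 1 else 0 :=
  Multiset.countP_cons _ _ _

lemma rho_add (E F : Multiset (V × V)) (X : V → Bool) :
    rho (E + F) X = rho E X + rho F X := Multiset.countP_add _ _ _

lemma arcsOf_cons_cons (a b : V) (l : List V) :
    arcsOf (a :: b :: l) = (a, b) ::ₘ arcsOf (b :: l) := rfl

lemma cross_exists (X : V → Bool) :
    ∀ (P : List V) (v t : V), P.head? = some v → P.getLast? = some t →
      X v = false → X t = true → 1 ≤ rho (arcsOf P) X := by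
  intro P
  induction P with
  | nil => intro v t h; simp at h
  | cons a P ih =>
    intro v t hh hl hv ht
    simp at hh; subst hh
    match P, hl with
    | [], hl => simp at hl; subst hl; rw [hv] at ht; exact absurd ht (by simp)
    | b :: P, hl =>
      rw [List.getLast?_cons_cons] at hl
      by_cases hb : X b = true
      · rw [arcsOf_cons_cons, rho_cons]
        simp [hv, hb]
      · have := ih b t rfl hl (by simpa using hb) ht
        rw [arcsOf_cons_cons, rho_cons]
        omega

lemma menger_easy {E : Multiset (V × V)} {v t : V} {n : ℕ} {X : V → Bool}
    (h : HasDisjPaths E v t n) (ht : X t = true) (hv : X v = false) :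
    n ≤ rho E X := by
  obtain ⟨Ps, hlen, hends, hle⟩ := h
  have key : ∀ Qs : List (List V), (∀ P ∈ Qs, P.head? = some v ∧ P.getLast? = some t) →
      Qs.length ≤ rho ((Qs.map fun P => ((P.zip P.tail : List (V × V)) : Multiset (V × V))).sum) X := by
    intro Qs
    induction Qs with
    | nil => simp [rho]
    | cons P Qs ih =>
      intro hQ
      have h1 : 1 ≤ rho (arcsOf P) X :=
        cross_exists X P v t (hQ P (by simp)).1 (hQ P (by simp)).2 hv ht
      have h2 := ih (fun Q hQ' => hQ Q (by simp [hQ']))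
      simp only [List.map_cons, List.sum_cons, List.length_cons, rho_add]
      have : rho (arcsOf P) X = rho ((P.zip P.tail : List (V × V)) : Multiset (V × V)) X := rfl
      omega
  calc n = Ps.length := hlen.symm
    _ ≤ _ := key Ps hends
    _ ≤ rho E X := rho_mono hle X

def inD (E : Multiset (V × V)) (y : V) : ℕ := E.countP fun a => a.2 = y
def outD (E : Multiset (V × V)) (y : V) : ℕ := E.countP fun a => a.1 = y

def exc (E : Multiset (V × V)) (y : V) : ℤ := (inD E y : ℤ) - outD E y

lemma exc_add (E F : Multiset (V × V)) (y : V) :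
    exc (E + F) y = exc E y + exc F y := by
  simp [exc, inD, outD, Multiset.countP_add]; ring

lemma exc_sub {E F : Multiset (V × V)} (h : F ≤ E) (y : V) :
    exc (E - F) y = exc E y - exc F y := by
  have h1 : E - F + F = E := tsub_add_cancel_of_le h
  have h2 := exc_add (E - F) F y
  rw [h1] at h2; omega

lemma exc_cons (a : V × V) (E : Multiset (V × V)) (y : V) :
    exc (a ::ₘ E) y = exc E y + (if a.2 = y then 1 else 0) - (if a.1 = y then 1 else 0) := by
  simp only [exc, inD, outD, Multiset.countP_cons]
  split <;> split <;> push_cast <;> ring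

lemma cut_diff (E : Multiset (V × V)) (S : Finset V)
    (hS : ∀ a ∈ E, a.1 ∈ S ∧ a.2 ∈ S) (X : V → Bool) :
    (rho E X : ℤ) - rho E (fun y => !X y) =
      ∑ y ∈ S.filter (fun y => X y = true), exc E y := by
  induction E using Multiset.induction_on with
  | empty => simp [rho, exc, inD, outD]
  | cons a E ih =>
    have ha := hS a (Multiset.mem_cons_self _ _)
    have ih' := ih (fun b hb => hS b (Multiset.mem_cons_of_mem hb))
    have hsum : ∑ y ∈ S.filter (fun y => X y = true), exc (a ::ₘ E) y =
        (∑ y ∈ S.filter (fun y => X y = true), exc E y) +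
          (if X a.2 = true then 1 else 0) - (if X a.1 = true then 1 else 0) := by
      simp only [exc_cons]
      rw [show (fun y => exc E y + (if a.2 = y then (1:ℤ) else 0) - (if a.1 = y then 1 else 0))
          = (fun y => exc E y + ((if a.2 = y then (1:ℤ) else 0) - (if a.1 = y then 1 else 0)))
          from by funext y; ring]
      rw [Finset.sum_add_distrib, Finset.sum_sub_distrib, Finset.sum_ite_eq, Finset.sum_ite_eq]
      simp only [Finset.mem_filter, ha.1, ha.2, true_and]
      ring
    rw [hsum, rho_cons, rho_cons, ← ih']
    by_cases h1 : X a.1 <;> by_cases h2 : X a.2 <;> simp [h1, h2] <;> push_cast <;> ring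

noncomputable def supp (E : Multiset (V × V)) : Finset V :=
  (E.toList.map Prod.fst ++ E.toList.map Prod.snd).toFinset

lemma mem_supp {E : Multiset (V × V)} {a : V × V} (h : a ∈ E) :
    a.1 ∈ supp E ∧ a.2 ∈ supp E := by
  have h' : a ∈ E.toList := by rwa [Multiset.mem_toList]
  constructor <;>
    · simp only [supp, List.toFinset_append, Finset.mem_union, List.mem_toFinset, List.mem_map]
      first
      | exact Or.inl ⟨a, h', rfl⟩
      | exact Or.inr ⟨a, h', rfl⟩

lemma euler_compl {E : Multiset (V × V)} (hEul : ∀ y, inD E y = outD E y) (X : V → Bool) :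
    rho E X = rho E (fun y => !X y) := by
  have h := cut_diff E (supp E) (fun a ha => mem_supp ha) X
  have hz : ∀ y ∈ (supp E).filter (fun y => X y = true), exc E y = 0 := by
    intro y _; simp [exc, hEul y]
  rw [Finset.sum_congr rfl hz] at h
  simp at h
  omega

def cnt (E : Multiset (V × V)) (p q : V → Bool) : ℕ :=
  E.countP fun a => p a.1 = true ∧ q a.2 = true

lemma cnt_pos {E : Multiset (V × V)} {p q : V → Bool} {a : V × V}
    (ha : a ∈ E) (hp : p a.1 = true) (hq : q a.2 = true) : 1 ≤ cnt E p q := by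
  have : 0 < cnt E p q := Multiset.countP_pos.mpr ⟨a, ha, hp, hq⟩
  omega

/-- submodularity (exact form). -/
lemma submod (E : Multiset (V × V)) (X Y : V → Bool) :
    rho E X + rho E Y = rho E (fun y => X y || Y y) + rho E (fun y => X y && Y y)
      + cnt E (fun y => X y && !Y y) (fun y => Y y && !X y)
      + cnt E (fun y => Y y && !X y) (fun y => X y && !Y y) := by
  induction E using Multiset.induction_on with
  | empty => simp [rho, cnt]
  | cons a E ih =>
    simp only [rho, cnt, Multiset.countP_cons] at *
    by_cases h1 : X a.1 <;> by_cases h2 : Y a.1 <;> by_cases h3 : X a.2 <;> by_cases h4 : Y a.2 <;>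
      simp [h1, h2, h3, h4] at ih ⊢ <;> omega

/-- posimodularity (exact form). -/
lemma posimod (E : Multiset (V × V)) (X Y : V → Bool) :
    rho E X + rho E Y + rho E (fun y => !(X y && Y y)) =
      rho E (fun y => X y && !Y y) + rho E (fun y => Y y && !X y)
      + cnt E (fun y => X y && Y y) (fun y => !X y && !Y y)
      + cnt E (fun y => !X y && !Y y) (fun y => X y && Y y)
      + rho E (fun y => X y && Y y) := by
  induction E using Multiset.induction_on with
  | empty => simp [rho, cnt]
  | cons a E ih =>
    simp only [rho, cnt, Multiset.countP_cons] at *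
    by_cases h1 : X a.1 <;> by_cases h2 : Y a.1 <;> by_cases h3 : X a.2 <;> by_cases h4 : Y a.2 <;>
      simp [h1, h2, h3, h4] at ih ⊢ <;> omega

/-- Eulerian posimodularity with strict defect term. -/
lemma posimod_euler {E : Multiset (V × V)} (hEul : ∀ y, inD E y = outD E y)
    (X Y : V → Bool) {u s : V} (hus : (u, s) ∈ E)
    (hXu : X u = true) (hYu : Y u = true) (hXs : X s = false) (hYs : Y s = false) :
    rho E (fun y => X y && !Y y) + rho E (fun y => Y y && !X y) + 1 ≤
      rho E X + rho E Y := by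
  have h1 := posimod E X Y
  have h2 := euler_compl hEul (fun y => X y && Y y)
  have h3 : 1 ≤ cnt E (fun y => X y && Y y) (fun y => !X y && !Y y) :=
    cnt_pos hus (by simp [hXu, hYu]) (by simp [hXs, hYs])
  omega

lemma getLast?_cons_of_ne_nil {x : V} {P : List V} (h : P ≠ []) :
    (x :: P).getLast? = P.getLast? := by
  match P, h with
  | b :: rest, _ => rw [List.getLast?_cons_cons]

lemma exc_arcsOf : ∀ (P : List V) (v t y : V), P.head? = some v → P.getLast? = some t →
    exc (arcsOf P) y = (if t = y then 1 else 0) - (if v = y then 1 else 0) := by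
  intro P
  induction P with
  | nil => intro v t y h; simp at h
  | cons a P ih =>
    intro v t y hh hl
    have hav : a = v := by simpa using hh
    match P, hl with
    | [], hl =>
      simp at hl
      rw [hav] at hl ⊢
      rw [hl]
      simp [arcsOf, exc, inD, outD]
    | b :: P, hl =>
      rw [List.getLast?_cons_cons] at hl
      rw [hav, arcsOf_cons_cons, exc_cons]
      rw [ih b t y rfl hl]
      simp only []
      by_cases h1 : t = y <;> by_cases h2 : v = y <;> by_cases h3 : b = y <;>
        simp [h1, h2, h3] <;> omega

lemma extract_walk (t : V) : ∀ (N : ℕ) (F : Multiset (V × V)) (x : V), Multiset.card F ≤ N →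
    x ≠ t → (∀ y, y ≠ t → exc F y ≤ 0) → exc F x < 0 →
    ∃ P : List V, P.head? = some x ∧ P.getLast? = some t ∧ arcsOf P ≤ F := by
  intro N
  induction N with
  | zero =>
    intro F x hcard hxt hinv hx
    have h : Multiset.card F = 0 := Nat.le_antisymm hcard (Nat.zero_le _)
    rw [Multiset.card_eq_zero] at h; subst h
    simp [exc, inD, outD] at hx
  | succ N ih =>
    intro F x hcard hxt hinv hx
    -- there is an outgoing arc at x
    have hout : 0 < outD F x := by
      have := hinv; unfold exc at hx; omega
    obtain ⟨a, haF, hax⟩ := Multiset.countP_pos.mp hout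
    obtain ⟨p, z⟩ := a
    simp at hax
    rw [hax] at haF
    by_cases hz : z = t
    · rw [hz] at haF
      refine ⟨[x, t], rfl, rfl, ?_⟩
      have h : arcsOf [x, t] = {(x, t)} := rfl
      rw [h, Multiset.singleton_le]; exact haF
    · -- recurse from z on F.erase (x,z)
      set F' := F.erase (x, z) with hF'
      have hcons : (x, z) ::ₘ F' = F := Multiset.cons_erase haF
      have hce : ∀ y, exc F y = exc F' y + (if z = y then 1 else 0) - (if x = y then 1 else 0) := by
        intro y
        have := exc_cons (x, z) F' y
        rw [hcons] at this; exact this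
      have hcard' : Multiset.card F' ≤ N := by
        have h2 := Multiset.card_erase_of_mem haF
        rw [← hF', Nat.pred_eq_sub_one] at h2
        omega
      have hinv' : ∀ y, y ≠ t → exc F' y ≤ 0 := by
        intro y hy
        have h1 := hce y
        have h2 := hinv y hy
        by_cases hxy : x = y
        · subst hxy
          by_cases hzy : z = x <;> simp [hzy] at h1 <;> omega
        · by_cases hzy : z = y <;> simp [hxy, hzy] at h1 <;> omega
      have hz' : exc F' z < 0 := by
        have h1 := hce z
        have h2 := hinv z hz
        by_cases hxz : x = z
        · subst hxz; simp at h1; omega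
        · simp [hxz] at h1; omega
      obtain ⟨P', hh', hl', hle'⟩ := ih F' z hcard' hz hinv' hz'
      match P', hh' with
      | b :: P', hh' =>
        simp at hh'; subst hh'
        refine ⟨x :: b :: P', rfl, ?_, ?_⟩
        · rw [List.getLast?_cons_cons]; exact hl'
        · rw [arcsOf_cons_cons, ← hcons]
          exact Multiset.cons_le_cons _ hle'

lemma flow_paths (v t : V) (hvt : v ≠ t) :
    ∀ (n : ℕ) (F : Multiset (V × V)),
    (∀ y, y ≠ t → exc F y ≤ 0) → exc F v ≤ -(n : ℤ) →
    ∃ Ps : List (List V), Ps.length = n ∧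
      (∀ P ∈ Ps, P.head? = some v ∧ P.getLast? = some t) ∧
      (Ps.map fun P => ((P.zip P.tail : List (V × V)) : Multiset (V × V))).sum ≤ F := by
  intro n
  induction n with
  | zero => intro F _ _; exact ⟨[], rfl, by simp, by simp⟩
  | succ n ih =>
    intro F hinv hv
    have hv0 : exc F v < 0 := by omega
    obtain ⟨P, hh, hl, hle⟩ :=
      extract_walk t (Multiset.card F) F v le_rfl hvt hinv hv0
    set F' := F - arcsOf P with hF'
    have hexc : ∀ y, exc F' y = exc F y - ((if t = y then 1 else 0) - (if v = y then 1 else 0)) := by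
      intro y
      rw [hF', exc_sub hle, exc_arcsOf P v t y hh hl]
    have hinv' : ∀ y, y ≠ t → exc F' y ≤ 0 := by
      intro y hy
      have h1 := hexc y
      have h2 := hinv y hy
      by_cases hvy : v = y
      · subst hvy; simp [Ne.symm hy] at h1 ⊢; omega
      · simp [hvy, (Ne.symm hy : ¬ (t = y))] at h1 <;> omega
    have hv' : exc F' v ≤ -(n : ℤ) := by
      have h1 := hexc v
      simp [hvt, Ne.symm hvt] at h1
      push_cast
      omega
    obtain ⟨Ps, hlen, hends, hsum⟩ := ih F' hinv' hv'
    refine ⟨P :: Ps, by simp [hlen], ?_, ?_⟩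
    · intro Q hQ
      rcases List.mem_cons.mp hQ with rfl | hQ
      · exact ⟨hh, hl⟩
      · exact hends Q hQ
    · have hsum' : arcsOf P + (Ps.map fun Q => ((Q.zip Q.tail : List (V × V)) : Multiset (V × V))).sum ≤ F :=
        (le_tsub_iff_left hle).mp hsum
      calc ((P :: Ps).map fun Q => ((Q.zip Q.tail : List (V × V)) : Multiset (V × V))).sum
          = arcsOf P + (Ps.map fun Q => ((Q.zip Q.tail : List (V × V)) : Multiset (V × V))).sum := by
            simp [arcsOf]
        _ ≤ F := hsum'

lemma flow_hasDisjPaths {E F : Multiset (V × V)} {v t : V} (hvt : v ≠ t) (n : ℕ)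
    (hFE : F ≤ E) (hinv : ∀ y, y ≠ t → exc F y ≤ 0) (hv : exc F v ≤ -(n : ℤ)) :
    HasDisjPaths E v t n := by
  obtain ⟨Ps, h1, h2, h3⟩ := flow_paths v t hvt n F hinv hv
  exact ⟨Ps, h1, h2, le_trans h3 hFE⟩

def resStep (E F : Multiset (V × V)) (a b : V) : Prop :=
  F.count (a, b) < E.count (a, b) ∨ (b, a) ∈ F

inductive Reach (E F : Multiset (V × V)) (v : V) : V → Prop
  | refl : Reach E F v v
  | step {a b : V} : Reach E F v a → resStep E F a b → Reach E F v b

lemma chain'_rel_zip {R : V → V → Prop} :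
    ∀ {P : List V}, List.Chain' R P → ∀ q ∈ P.zip P.tail, R q.1 q.2 := by
  intro P
  induction P with
  | nil => intro _ q hq; simp at hq
  | cons a P ih =>
    intro hch q hq
    match P, hq with
    | b :: P, hq =>
      rw [List.Chain', List.isChain_cons_cons] at hch
      rcases List.mem_cons.mp hq with rfl | hq
      · exact hch.1
      · exact ih hch.2 q hq

lemma zip_tail_nodup : ∀ {P : List V}, P.Nodup → (P.zip P.tail).Nodup := by
  intro P
  induction P with
  | nil => intro _; simp
  | cons a P ih =>
    intro hnd
    match P with
    | [] => simp
    | b :: P =>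
      have h1 : ((b :: P).zip P).Nodup := ih (List.nodup_cons.mp hnd).2
      rw [show (a :: b :: P).zip (a :: b :: P).tail = (a, b) :: ((b :: P).zip P) from rfl]
      rw [List.nodup_cons]
      refine ⟨fun hmem => ?_, h1⟩
      have := (List.of_mem_zip hmem).1
      exact (List.nodup_cons.mp hnd).1 this

lemma reach_simple_path {E F : Multiset (V × V)} {v x : V} (h : Reach E F v x) :
    ∃ P : List V, P.head? = some v ∧ P.getLast? = some x ∧ P.Nodup ∧
      List.Chain' (resStep E F) P := by
  induction h with
  | refl => exact ⟨[v], rfl, rfl, List.nodup_singleton v, List.isChain_singleton v⟩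
  | @step a b _ hstep ih =>
    obtain ⟨P, hh, hl, hnd, hch⟩ := ih
    by_cases hb : b ∈ P
    · obtain ⟨P₁, P₂, rfl⟩ := List.append_of_mem hb
      refine ⟨P₁ ++ [b], ?_, List.getLast?_concat, ?_, ?_⟩
      · rw [List.head?_append] at hh ⊢
        cases P₁ <;> simpa using hh
      · refine hnd.sublist ?_
        exact List.Sublist.append_left (List.Sublist.cons₂ b (List.nil_sublist P₂)) P₁
      · refine hch.prefix ⟨P₂, by simp⟩
    · refine ⟨P ++ [b], ?_, List.getLast?_concat, ?_, ?_⟩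
      · rw [List.head?_append, hh]; rfl
      · rw [List.nodup_append]
        exact ⟨hnd, List.nodup_singleton b, fun x hx y hy hxy => by simp at hy; exact hb (by rw [← hy, ← hxy]; exact hx)⟩
      · rw [List.Chain', List.isChain_append]
        refine ⟨hch, List.isChain_singleton b, fun p hp y hy => ?_⟩
        rw [hl] at hp; simp at hp hy; subst hp; subst hy
        exact hstep

lemma augment {E F : Multiset (V × V)} (hFE : F ≤ E) {v t : V} {P : List V}
    (hh : P.head? = some v) (hl : P.getLast? = some t) (hnd : P.Nodup)
    (hch : List.Chain' (resStep E F) P) :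
    ∃ F' : Multiset (V × V), F' ≤ E ∧
      ∀ y, exc F' y = exc F y + ((if t = y then 1 else 0) - (if v = y then 1 else 0)) := by
  classical
  set S : Multiset (V × V) := arcsOf P with hS
  have hSnd : S.Nodup := by
    rw [hS, arcsOf, Multiset.coe_nodup]
    exact zip_tail_nodup hnd
  have hStep : ∀ p ∈ S, resStep E F p.1 p.2 := by
    intro p hp
    exact chain'_rel_zip hch p (by rwa [hS, arcsOf, Multiset.mem_coe] at hp)
  set pred : V × V → Prop := fun p => F.count p < E.count p with hpred
  set fwd := S.filter pred with hfwd
  set bwd := (S.filter (fun p => ¬ pred p)).map Prod.swap with hbwd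
  have hfwd_le : fwd ≤ E - F := by
    rw [Multiset.le_iff_count]
    intro a
    by_cases ha : a ∈ fwd
    · have h1 : fwd.count a ≤ 1 :=
        Multiset.nodup_iff_count_le_one.mp (hSnd.filter pred) a
      have h2 : pred a := (Multiset.mem_filter.mp ha).2
      rw [Multiset.count_sub]
      omega
    · rw [Multiset.count_eq_zero_of_notMem ha]; exact Nat.zero_le _
  have hbwd_le : bwd ≤ F := by
    rw [Multiset.le_iff_count]
    intro a
    by_cases ha : a ∈ bwd
    · have h1 : bwd.count a ≤ 1 := by
        refine Multiset.nodup_iff_count_le_one.mp ?_ a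
        exact (hSnd.filter _).map Prod.swap_injective
      obtain ⟨q, hq, rfl⟩ := Multiset.mem_map.mp ha
      have hq1 := Multiset.mem_filter.mp hq
      have := hStep q hq1.1
      rcases this with hfc | hbc
      · exact absurd hfc hq1.2
      · have hmem : Prod.swap q ∈ F := by
          obtain ⟨q1, q2⟩ := q
          simpa using hbc
        have := Multiset.one_le_count_iff_mem.mpr hmem
        omega
    · rw [Multiset.count_eq_zero_of_notMem ha]; exact Nat.zero_le _
  refine ⟨F - bwd + fwd, ?_, ?_⟩
  · have h1 : F - bwd ≤ F := Multiset.sub_le_self _ _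
    have h2 : fwd ≤ E - (F - bwd) := le_trans hfwd_le (tsub_le_tsub_left h1 E)
    exact (le_tsub_iff_left (le_trans h1 hFE)).mp h2
  · intro y
    have e1 : exc (F - bwd + fwd) y = exc F y - exc bwd y + exc fwd y := by
      rw [exc_add, exc_sub hbwd_le]
    have e2 : exc bwd y = - exc (S.filter (fun p => ¬ pred p)) y := by
      rw [hbwd]
      unfold exc inD outD
      rw [Multiset.countP_map, Multiset.countP_map]
      rw [Multiset.countP_eq_card_filter, Multiset.countP_eq_card_filter]
      simp only [Prod.fst_swap, Prod.snd_swap]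
      ring
    have e3 : exc fwd y + exc (S.filter (fun p => ¬ pred p)) y = exc S y := by
      rw [← exc_add, hfwd, Multiset.filter_add_not]
    have e4 : exc S y = (if t = y then 1 else 0) - (if v = y then 1 else 0) :=
      exc_arcsOf P v t y hh hl
    omega

lemma countP_le_of_count {E F : Multiset (V × V)} (p : V × V → Prop) [DecidablePred p]
    (h : ∀ a, p a → E.count a ≤ F.count a) : E.countP p ≤ F.countP p := by
  rw [Multiset.countP_eq_card_filter, Multiset.countP_eq_card_filter]
  refine Multiset.card_le_card ?_
  rw [Multiset.le_iff_count]
  intro a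
  rw [Multiset.count_filter, Multiset.count_filter]
  split
  · exact h a (by assumption)
  · exact le_rfl

lemma rho_congr {E : Multiset (V × V)} {X Y : V → Bool} (h : ∀ y, X y = Y y) :
    rho E X = rho E Y := by
  have : X = Y := funext h
  rw [this]

lemma exc_eq_cut (F : Multiset (V × V)) (v : V) :
    exc F v = (rho F (fun y => decide (y = v)) : ℤ) - rho F (fun y => !decide (y = v)) := by
  induction F using Multiset.induction_on with
  | empty => simp [exc, inD, outD, rho]
  | cons a F ih =>
    rw [exc_cons, rho_cons, rho_cons]
    by_cases h1 : a.1 = v <;> by_cases h2 : a.2 = v <;>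
      simp [h1, h2] <;> push_cast <;> omega

lemma menger_hard (E : Multiset (V × V)) (v t : V) (hvt : v ≠ t) (n : ℕ)
    (hcut : ∀ X : V → Bool, X t = true → X v = false → n ≤ rho E X) :
    HasDisjPaths E v t n := by
  classical
  set S : Finset V := supp E ∪ {v, t} with hSdef
  have hvS : v ∈ S := by simp [hSdef]
  have htS : t ∈ S := by simp [hSdef]
  have hFS : ∀ F : Multiset (V × V), F ≤ E → ∀ a ∈ F, a.1 ∈ S ∧ a.2 ∈ S := by
    intro F hFE a ha
    have := mem_supp (Multiset.mem_of_le hFE ha)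
    constructor <;> simp [hSdef, this.1, this.2]
  have key : ∀ m, m ≤ n → ∃ F, F ≤ E ∧ (∀ y, y ≠ v → y ≠ t → exc F y = 0) ∧
      exc F t = m := by
    intro m
    induction m with
    | zero => exact fun _ => ⟨0, Multiset.zero_le _, fun y _ _ => by simp [exc, inD, outD],
        by simp [exc, inD, outD]⟩
    | succ m ih =>
      intro hmn
      obtain ⟨F, hFE, hcons, hval⟩ := ih (by omega)
      have hreach : Reach E F v t := by
        by_contra hnr
        set X : V → Bool := fun y => decide (¬ Reach E F v y) with hX
        have h1 : X t = true := by simp [hX, hnr]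
        have h2 : X v = false := by simp [hX]; exact Reach.refl
        have hsat : rho E X ≤ rho F X := by
          refine countP_le_of_count _ ?_
          rintro ⟨a1, a2⟩ ⟨ha1, ha2⟩
          by_contra hcount
          simp [hX] at ha1 ha2
          exact ha2 (Reach.step ha1 (Or.inl (by omega)))
        have hnoback : rho F (fun y => !X y) = 0 := by
          refine Multiset.countP_eq_zero.mpr ?_
          rintro ⟨a1, a2⟩ ha ⟨hb1, hb2⟩
          simp [hX] at hb1 hb2
          exact hb1 (Reach.step hb2 (Or.inr ha))
        have hdiff := cut_diff F S (hFS F hFE) X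
        have hsum : ∑ y ∈ S.filter (fun y => X y = true), exc F y = m := by
          rw [Finset.sum_eq_single t]
          · exact hval
          · intro y hy hyt
            refine hcons y ?_ hyt
            rintro rfl
            have := (Finset.mem_filter.mp hy).2
            rw [h2] at this; simp at this
          · intro ht'
            exact absurd (Finset.mem_filter.mpr ⟨htS, h1⟩) ht'
        rw [hsum, hnoback] at hdiff
        have : rho F X = m := by omega
        have := hcut X h1 h2
        omega
      obtain ⟨P, hh, hl, hnd, hch⟩ := reach_simple_path hreach
      obtain ⟨F', hF'E, hexc⟩ := augment hFE hh hl hnd hch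
      refine ⟨F', hF'E, ?_, ?_⟩
      · intro y hyv hyt
        rw [hexc y]
        simp [(Ne.symm hyt : ¬ t = y), (Ne.symm hyv : ¬ v = y)]
        exact hcons y hyv hyt
      · rw [hexc t]
        simp [(hvt : ¬ v = t)]
        omega
  obtain ⟨F, hFE, hcons, hval⟩ := key n le_rfl
  -- compute exc F v = -n
  have hdiff := cut_diff F S (hFS F hFE) (fun y => !decide (y = v))
  have hsum : ∑ y ∈ S.filter (fun y => (!decide (y = v)) = true), exc F y = n := by
    rw [Finset.sum_eq_single t]
    · exact hval
    · intro y hy hyt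
      refine hcons y ?_ hyt
      have := (Finset.mem_filter.mp hy).2
      simpa using this
    · intro ht'
      refine absurd (Finset.mem_filter.mpr ⟨htS, by simpa using Ne.symm hvt⟩) ht'
  rw [hsum] at hdiff
  have hcv : exc F v = -(n : ℤ) := by
    rw [exc_eq_cut F v]
    have e1 : rho F (fun y => !(!decide (y = v))) = rho F (fun y => decide (y = v)) :=
      rho_congr (by intro y; simp)
    omega
  refine flow_hasDisjPaths hvt n hFE ?_ (le_of_eq hcv)
  intro y hy
  by_cases hyv : y = v
  · subst hyv; omega
  · rw [hcons y hyv hy]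
def sep (X : V → Bool) (a b : V) : Prop :=
  (X a = true ∧ X b = false) ∨ (X b = true ∧ X a = false)

/-- `X` is a tight set: it does not contain `s` and its in-degree is at most the
connectivity of some pair separated by it. -/
def Tight (E : Multiset (V × V)) (s : V) (X : V → Bool) : Prop :=
  X s = false ∧ ∃ a b : V, a ≠ s ∧ b ≠ s ∧ sep X a b ∧ HasDisjPaths E a b (rho E X)

lemma hdp_mono {E : Multiset (V × V)} {v t : V} {n m : ℕ}
    (h : HasDisjPaths E v t n) (hm : m ≤ n) : HasDisjPaths E v t m := by
  obtain ⟨Ps, hlen, hends, hsum⟩ := h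
  refine ⟨Ps.take m, by simp [hlen, hm], fun P hP => hends P (List.take_subset m Ps hP), ?_⟩
  refine le_trans ?_ hsum
  rw [List.map_take]
  conv_rhs => rw [← List.take_append_drop m (Ps.map fun P => ((P.zip P.tail : List (V × V)) : Multiset (V × V)))]
  rw [List.sum_append]
  exact le_self_add

lemma hdp_refl (E : Multiset (V × V)) (v : V) (n : ℕ) : HasDisjPaths E v v n := by
  refine ⟨List.replicate n [v], by simp, ?_, ?_⟩
  · intro P hP
    rw [List.eq_of_mem_replicate hP]
    exact ⟨rfl, rfl⟩
  · have : (List.replicate n [v]).map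
        (fun P => ((P.zip P.tail : List (V × V)) : Multiset (V × V))) =
        List.replicate n 0 := by
      rw [List.map_replicate]; rfl
    rw [this]
    simp [List.sum_replicate]

lemma sep_cut {E : Multiset (V × V)} (hEul : ∀ y, inD E y = outD E y)
    {X : V → Bool} {a b : V} {n : ℕ} (h : sep X a b) (hp : HasDisjPaths E a b n) :
    n ≤ rho E X := by
  rcases h with ⟨ha, hb⟩ | ⟨hb, ha⟩
  · have := menger_easy (X := fun y => !X y) hp (by simp [hb]) (by simp [ha])
    rwa [← euler_compl hEul] at this
  · exact menger_easy hp hb ha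

lemma quad (X Y : V → Bool) {a b : V} (h : sep X a b) :
    (sep (fun y => X y && Y y) a b ∧ sep (fun y => X y || Y y) a b) ∨
    (sep (fun y => X y && !Y y) a b ∧ sep (fun y => Y y && !X y) a b) ∨
    (sep (fun y => X y && Y y) a b ∧ sep (fun y => Y y && !X y) a b) ∨
    (sep (fun y => X y && !Y y) a b ∧ sep (fun y => X y || Y y) a b) := by
  by_cases hYa : Y a <;> by_cases hYb : Y b <;>
    rcases h with ⟨h1, h2⟩ | ⟨h1, h2⟩ <;>
      simp [sep, h1, h2, hYa, hYb] <;> tauto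

lemma quad' (X Y : V → Bool) {a b : V} (h : sep Y a b) :
    (sep (fun y => X y && Y y) a b ∧ sep (fun y => X y || Y y) a b) ∨
    (sep (fun y => Y y && !X y) a b ∧ sep (fun y => X y && !Y y) a b) ∨
    (sep (fun y => X y && Y y) a b ∧ sep (fun y => X y && !Y y) a b) ∨
    (sep (fun y => Y y && !X y) a b ∧ sep (fun y => X y || Y y) a b) := by
  by_cases hXa : X a <;> by_cases hXb : X b <;>
    rcases h with ⟨h1, h2⟩ | ⟨h1, h2⟩ <;>
      simp [sep, h1, h2, hXa, hXb] <;> tauto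

lemma tight_union {E : Multiset (V × V)} {s u : V}
    (hEul : ∀ y, inD E y = outD E y) (hus : (u, s) ∈ E) (hu : u ≠ s)
    {X Y : V → Bool} (hX : Tight E s X) (hY : Tight E s Y)
    (hXu : X u = true) (hYu : Y u = true) :
    Tight E s (fun y => X y || Y y) := by
  obtain ⟨hXs, a1, b1, ha1, hb1, hsep1, hpath1⟩ := hX
  obtain ⟨hYs, a2, b2, ha2, hb2, hsep2, hpath2⟩ := hY
  have hsub := submod E X Y
  have hpos := posimod_euler hEul X Y hus hXu hYu hXs hYs
  have hUs : (fun y => X y || Y y) s = false := by simp [hXs, hYs]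
  have q1 := quad X Y hsep1
  have q2 := quad' X Y hsep2
  rcases q1 with ⟨sA, sB⟩ | ⟨sA, sB⟩ | ⟨sA, sB⟩ | ⟨sA, sB⟩ <;>
    rcases q2 with ⟨sC, sD⟩ | ⟨sC, sD⟩ | ⟨sC, sD⟩ | ⟨sC, sD⟩ <;>
      [skip; skip; skip; skip; skip; skip; skip; skip;
       skip; skip; skip; skip; skip; skip; skip; skip]
  -- (1,1) B1 B2 : success pair2
  · have bA := sep_cut hEul sA hpath1
    exact ⟨hUs, a2, b2, ha2, hb2, sD, hdp_mono hpath2 (by omega)⟩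
  -- (1,2) B1 C2 : success pair1
  · have bA := sep_cut hEul sA hpath1
    have bC := sep_cut hEul sC hpath2
    have bD := sep_cut hEul sD hpath2
    exact ⟨hUs, a1, b1, ha1, hb1, sB, hdp_mono hpath1 (by omega)⟩
  -- (1,3) B1 A2 : success pair1
  · have bC := sep_cut hEul sC hpath2
    exact ⟨hUs, a1, b1, ha1, hb1, sB, hdp_mono hpath1 (by omega)⟩
  -- (1,4) B1 D2 : success pair2
  · have bA := sep_cut hEul sA hpath1
    exact ⟨hUs, a2, b2, ha2, hb2, sD, hdp_mono hpath2 (by omega)⟩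
  -- (2,1) C1 B2 : success pair2
  · have bA := sep_cut hEul sA hpath1
    have bB := sep_cut hEul sB hpath1
    have bC := sep_cut hEul sC hpath2
    exact ⟨hUs, a2, b2, ha2, hb2, sD, hdp_mono hpath2 (by omega)⟩
  -- (2,2) C1 C2 : contradiction
  · have bA := sep_cut hEul sA hpath1
    have bC := sep_cut hEul sC hpath2
    omega
  -- (2,3) C1 A2 : contradiction
  · have bB := sep_cut hEul sB hpath1
    have bD := sep_cut hEul sD hpath2
    omega
  -- (2,4) C1 D2 : contradiction
  · have bA := sep_cut hEul sA hpath1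
    have bC := sep_cut hEul sC hpath2
    omega
  -- (3,1) A1 B2 : success pair2
  · have bA := sep_cut hEul sA hpath1
    exact ⟨hUs, a2, b2, ha2, hb2, sD, hdp_mono hpath2 (by omega)⟩
  -- (3,2) A1 C2 : contradiction
  · have bB := sep_cut hEul sB hpath1
    have bD := sep_cut hEul sD hpath2
    omega
  -- (3,3) A1 A2 : contradiction
  · have bB := sep_cut hEul sB hpath1
    have bD := sep_cut hEul sD hpath2
    omega
  -- (3,4) A1 D2 : success pair2
  · have bA := sep_cut hEul sA hpath1
    exact ⟨hUs, a2, b2, ha2, hb2, sD, hdp_mono hpath2 (by omega)⟩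
  -- (4,1) D1 B2 : success pair1
  · have bC := sep_cut hEul sC hpath2
    exact ⟨hUs, a1, b1, ha1, hb1, sB, hdp_mono hpath1 (by omega)⟩
  -- (4,2) D1 C2 : contradiction
  · have bA := sep_cut hEul sA hpath1
    have bC := sep_cut hEul sC hpath2
    omega
  -- (4,3) D1 A2 : success pair1
  · have bC := sep_cut hEul sC hpath2
    exact ⟨hUs, a1, b1, ha1, hb1, sB, hdp_mono hpath1 (by omega)⟩
  -- (4,4) D1 D2 : contradiction
  · have bA := sep_cut hEul sA hpath1
    have bC := sep_cut hEul sC hpath2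
    omega

lemma rho_addS (E : Multiset (V × V)) (T : V → Bool) (s : V) (hTs : T s = false) :
    rho E (fun y => T y || decide (y = s)) + E.countP (fun a => a.1 = s ∧ T a.2 = true)
      = rho E T + E.countP (fun a => a.2 = s ∧ T a.1 = false ∧ a.1 ≠ s) := by
  induction E using Multiset.induction_on with
  | empty => simp [rho]
  | cons a E ih =>
    simp only [rho, Multiset.countP_cons] at *
    by_cases h1 : a.1 = s <;> by_cases h2 : a.2 = s <;>
      by_cases h3 : T a.1 <;> by_cases h4 : T a.2 <;>
        simp [h1, h2, h3, h4, hTs] at ih ⊢ <;> simp_all <;> omega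

lemma inS_split (E : Multiset (V × V)) (T : V → Bool) (s : V) :
    inD E s = E.countP (fun a => a.2 = s ∧ T a.1 = false ∧ a.1 ≠ s)
      + E.countP (fun a => a.2 = s ∧ (T a.1 = true ∨ a.1 = s)) := by
  induction E using Multiset.induction_on with
  | empty => simp [inD]
  | cons a E ih =>
    simp only [inD, Multiset.countP_cons] at *
    by_cases h1 : a.1 = s <;> by_cases h2 : a.2 = s <;> by_cases h3 : T a.1 <;>
      simp [h1, h2, h3] at ih ⊢ <;> simp_all <;> omega

lemma exists_good_w {E : Multiset (V × V)} {s u : V}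
    (hEul : ∀ y, inD E y = outD E y) (hus : (u, s) ∈ E) (hu : u ≠ s)
    (hnl : (s, s) ∉ E) :
    ∃ w, (s, w) ∈ E ∧ ∀ X : V → Bool, Tight E s X → ¬(X u = true ∧ X w = true) := by
  by_contra hcon
  push_neg at hcon
  have hout : 0 < outD E s := by
    have h1 : 0 < inD E s := Multiset.countP_pos.mpr ⟨(u, s), hus, rfl⟩
    rw [hEul s] at h1; exact h1
  have helper : ∀ l : List (V × V), (∀ p ∈ l, p ∈ E ∧ p.1 = s) →
      ∃ T : V → Bool, Tight E s T ∧ T u = true ∧ ∀ p ∈ l, T p.2 = true := by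
    intro l
    induction l with
    | nil =>
      intro _
      obtain ⟨a0, ha0, ha0s⟩ := Multiset.countP_pos.mp hout
      have ha0' : (s, a0.2) ∈ E := by
        rw [← ha0s]; simpa using ha0
      obtain ⟨X, hX, hXu, _⟩ := hcon a0.2 ha0'
      exact ⟨X, hX, hXu, by simp⟩
    | cons p l ih =>
      intro hmem
      obtain ⟨T, hT, hTu, hcov⟩ := ih (fun q hq => hmem q (List.mem_cons_of_mem p hq))
      have hp := hmem p (List.mem_cons_self (a := p) (l := l))
      have hpE : (s, p.2) ∈ E := by rw [← hp.2]; simpa using hp.1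
      obtain ⟨X, hX, hXu, hXw⟩ := hcon p.2 hpE
      refine ⟨fun y => T y || X y, tight_union hEul hus hu hT hX hTu hXu, by simp [hTu], ?_⟩
      intro q hq
      rcases List.mem_cons.mp hq with rfl | hq
      · simp [hXw]
      · simp [hcov q hq]
  obtain ⟨T, hT, hTu, hcov⟩ := helper (E.filter (fun a => a.1 = s)).toList
      (fun p hp => by
        rw [Multiset.mem_toList] at hp
        exact Multiset.mem_filter.mp hp)
  have hcovE : ∀ a ∈ E, a.1 = s → T a.2 = true := by
    intro a ha h1
    exact hcov a (by rw [Multiset.mem_toList]; exact Multiset.mem_filter.mpr ⟨ha, h1⟩)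
  obtain ⟨hTs, a, b, has, hbs, hsepT, hpathT⟩ := hT
  have hsep' : sep (fun y => T y || decide (y = s)) a b := by
    rcases hsepT with ⟨h1, h2⟩ | ⟨h1, h2⟩ <;> [left; right] <;>
      constructor <;> simp [h1, h2, has, hbs]
  have hle : rho E T ≤ rho E (fun y => T y || decide (y = s)) := by
    have := sep_cut hEul hsep' hpathT
    unfold Tight at *
    exact this
  have hid := rho_addS E T s hTs
  have hsplit := inS_split E T s
  have hc1 : E.countP (fun a => a.1 = s ∧ T a.2 = true) = outD E s := by
    unfold outD
    rw [Multiset.countP_eq_card_filter, Multiset.countP_eq_card_filter]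
    congr 1
    apply Multiset.filter_congr
    intro a ha
    exact ⟨fun h => h.1, fun h => ⟨h, hcovE a ha h⟩⟩
  have hc3 : 0 < E.countP (fun a => a.2 = s ∧ (T a.1 = true ∨ a.1 = s)) :=
    Multiset.countP_pos.mpr ⟨(u, s), hus, rfl, Or.inl hTu⟩
  have hin : inD E s = outD E s := hEul s
  omega

lemma hdp_iff_cut_eq {E E' : Multiset (V × V)} (h : ∀ X : V → Bool, rho E X = rho E' X)
    (v t : V) (n : ℕ) : HasDisjPaths E v t n ↔ HasDisjPaths E' v t n := by
  by_cases hvt : v = t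
  · subst hvt
    exact ⟨fun _ => hdp_refl _ _ _, fun _ => hdp_refl _ _ _⟩
  · constructor
    · intro hdp
      refine menger_hard E' v t hvt n (fun X ht hv => ?_)
      have h1 := menger_easy hdp ht hv
      have h2 := h X
      omega
    · intro hdp
      refine menger_hard E v t hvt n (fun X ht hv => ?_)
      have h1 := menger_easy hdp ht hv
      have h2 := h X
      omega

lemma rho_erase_loop (E : Multiset (V × V)) (c : V) (X : V → Bool) :
    rho (E.erase (c, c)) X = rho E X := by
  by_cases h : (c, c) ∈ E
  · conv_rhs => rw [← Multiset.cons_erase h]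
    rw [rho_cons]
    simp
  · rw [Multiset.erase_of_notMem h]

end FJ


/-- (Directed splitting-off theorem of Frank and Jackson.)
Let `E` be the arc multiset of an Eulerian multidigraph on `N ∪ {s}` and `(u,s) ∈ E`.
Then there is an arc `(s,w) ∈ E` such that replacing the pair `(u,s), (s,w)` by a new
parallel copy of `(u,w)` preserves the arc-connectivity `λ(v,t)` for all `v, t ≠ s`
(expressed as: for every `n`, there are `n` arc-disjoint `v`-`t` paths before iff
after). -/
theorem frank_jackson_splitting_off
    {V : Type*} [DecidableEq V]
    (E : Multiset (V × V)) (s u : V)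
    (hEul : ∀ v : V, (E.filter fun a => a.2 = v).card = (E.filter fun a => a.1 = v).card)
    (hus : (u, s) ∈ E) :
    ∃ w : V, (s, w) ∈ E ∧
      ∀ v t : V, v ≠ s → t ≠ s → ∀ n : ℕ,
        HasDisjPaths E v t n ↔
          HasDisjPaths ((u, w) ::ₘ ((E.erase (u, s)).erase (s, w))) v t n := by
  classical
  have hEulD : ∀ y, FJ.inD E y = FJ.outD E y := by
    intro y
    unfold FJ.inD FJ.outD
    rw [Multiset.countP_eq_card_filter, Multiset.countP_eq_card_filter]
    exact hEul y
  by_cases hu : u = s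
  · -- u = s : take w = s, the cut values are unchanged
    subst hu
    refine ⟨u, hus, fun v t hv ht n => FJ.hdp_iff_cut_eq (fun X => ?_) v t n⟩
    rw [FJ.rho_cons]
    rw [FJ.rho_erase_loop, FJ.rho_erase_loop]
    simp
  · by_cases hloop : (s, s) ∈ E
    · -- loop at s : take w = s
      refine ⟨s, hloop, fun v t hv ht n => FJ.hdp_iff_cut_eq (fun X => ?_) v t n⟩
      conv_lhs => rw [← Multiset.cons_erase hus]
      simp [FJ.rho_cons, FJ.rho_erase_loop]
      try omega
    · -- main case
      obtain ⟨w, hsw, hgood⟩ := FJ.exists_good_w hEulD hus hu hloop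
      have hsw' : (s, w) ∈ E.erase (u, s) := by
        rw [Multiset.mem_erase_of_ne (by simp [Ne.symm hu])]
        exact hsw
      have hE : (u, s) ::ₘ (s, w) ::ₘ ((E.erase (u, s)).erase (s, w)) = E := by
        rw [Multiset.cons_erase hsw', Multiset.cons_erase hus]
      have hdecE : ∀ X : V → Bool, FJ.rho E X = FJ.rho ((E.erase (u, s)).erase (s, w)) X
          + (if X u = false ∧ X s = true then 1 else 0)
          + (if X s = false ∧ X w = true then 1 else 0) := by
        intro X
        conv_lhs => rw [← hE]
        simp [FJ.rho_cons]
        try omega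
      have hdecE' : ∀ X : V → Bool,
          FJ.rho ((u, w) ::ₘ (E.erase (u, s)).erase (s, w)) X
            = FJ.rho ((E.erase (u, s)).erase (s, w)) X
              + (if X u = false ∧ X w = true then 1 else 0) := by
        intro X
        simp [FJ.rho_cons]
      refine ⟨w, hsw, fun v t hv ht n => ?_⟩
      by_cases hvt : v = t
      · subst hvt
        exact ⟨fun _ => FJ.hdp_refl _ _ _, fun _ => FJ.hdp_refl _ _ _⟩
      constructor
      · intro hdp
        refine FJ.menger_hard _ v t hvt n (fun X hXt hXv => ?_)
        have hbase := FJ.menger_easy hdp hXt hXv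
        have h1 := hdecE X
        have h2 := hdecE' X
        by_cases hXu : X u <;> by_cases hXs : X s <;> by_cases hXw : X w <;>
          simp only [hXu, hXs, hXw] at h1 h2 <;> simp at h1 h2 <;>
          try omega
        -- remaining : the two dangerous cases
        · -- X u = true, X s = false, X w = true
          by_contra hlt
          have hrho : FJ.rho E X ≤ n := by omega
          have hXs' : X s = false := by simpa using hXs
          have htight : FJ.Tight E s X :=
            ⟨hXs', v, t, hv, ht, Or.inr ⟨hXt, hXv⟩, FJ.hdp_mono hdp hrho⟩
          exact hgood X htight ⟨hXu, hXw⟩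
        · -- X u = false, X s = true, X w = false
          by_contra hlt
          have hrho : FJ.rho E X ≤ n := by omega
          have hYrho : FJ.rho E (fun y => !X y) = FJ.rho E X := (FJ.euler_compl hEulD X).symm
          have htight : FJ.Tight E s (fun y => !X y) := by
            refine ⟨by simp [hXs], v, t, hv, ht, Or.inl ⟨?_, ?_⟩, ?_⟩
            · simp [hXv]
            · simp [hXt]
            · rw [hYrho]; exact FJ.hdp_mono hdp hrho
          refine hgood _ htight ⟨?_, ?_⟩
          · simp only [Bool.not_eq_true'] at hXu ⊢; simpa using hXu
          · simp only [Bool.not_eq_true'] at hXw ⊢; simpa using hXw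
      · intro hdp
        refine FJ.menger_hard _ v t hvt n (fun X hXt hXv => ?_)
        have hbase := FJ.menger_easy hdp hXt hXv
        have h1 := hdecE X
        have h2 := hdecE' X
        by_cases hXu : X u <;> by_cases hXs : X s <;> by_cases hXw : X w <;>
          simp only [hXu, hXs, hXw] at h1 h2 <;> simp at h1 h2 <;> omega
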